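/- For λ = α ∉ ℕ and k ∈ ℕ, the Bessel-Fischer pairing on the Fock space F_α satisfies ⟨z₁^k, z₁^k⟩_B = k!·(−α)_k, ⟨z₁^k z₂, z₁^k z₂⟩_B = −k!·(−α)_k, and ⟨z₁^k z₃, z₁^k z₄⟩_B = −⟨z₁^k z₄, z₁^k z₃⟩_B = 2·k!·(−α)_{k+1}, where the Bessel-Fischer product is ⟨p,q⟩_B = p(B) q̄(z)|_{z=0}. -/

import Mathlib

open MvPolynomial

/-- Rising Pochhammer symbol `(a)_n = a(a+1)⋯(a+n-1)`. -/
noncomputable def poch (a : ℂ) (n : ℕ) : ℂ := ∏ j ∈ Finset.range n, (a + j)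

/-- The superpolynomial algebra `ℂ[z₁,z₂] ⊗ Λ(z₃,z₄)` in components: index
`0 ↦` coefficient of `1`, `1 ↦` coefficient of `z₃`, `2 ↦` coefficient of `z₄`,
`3 ↦` coefficient of `z₃z₄`; the even variables are `z₁ = X 0`, `z₂ = X 1`. -/
abbrev SP := Fin 4 → MvPolynomial (Fin 2) ℂ

/-- `B(z₁) = (-α + z₁∂₁ + z₃∂₃ + z₄∂₄)∂₁ - 2αz₂∂₃∂₄` (case `λ = α`). -/
noncomputable def B1 (α : ℂ) (f : SP) : SP :=
  ![C (-α) * pderiv 0 (f 0) + X 0 * pderiv 0 (pderiv 0 (f 0)) + C (2 * α) * X 1 * f 3,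
    C (1 - α) * pderiv 0 (f 1) + X 0 * pderiv 0 (pderiv 0 (f 1)),
    C (1 - α) * pderiv 0 (f 2) + X 0 * pderiv 0 (pderiv 0 (f 2)),
    C (2 - α) * pderiv 0 (f 3) + X 0 * pderiv 0 (pderiv 0 (f 3))]

/-- `B(z₂) = (-1 + z₂∂₂ + z₃∂₃ + z₄∂₄)∂₂ - 2z₁∂₃∂₄`. -/
noncomputable def B2 (α : ℂ) (f : SP) : SP :=
  ![C (-1 : ℂ) * pderiv 1 (f 0) + X 1 * pderiv 1 (pderiv 1 (f 0)) + C 2 * X 0 * f 3,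
    C (0 : ℂ) * pderiv 1 (f 1) + X 1 * pderiv 1 (pderiv 1 (f 1)),
    C (0 : ℂ) * pderiv 1 (f 2) + X 1 * pderiv 1 (pderiv 1 (f 2)),
    C (1 : ℂ) * pderiv 1 (f 3) + X 1 * pderiv 1 (pderiv 1 (f 3))]

/-- `B(z₃) = (-2α + 2z₁∂₁ + 2αz₂∂₂ + 2(1+α)z₃∂₃)∂₄ + z₃∂₁∂₂`. -/
noncomputable def B3 (α : ℂ) (f : SP) : SP :=
  ![C (-2 * α) * f 2 + C 2 * X 0 * pderiv 0 (f 2) + C (2 * α) * X 1 * pderiv 1 (f 2),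
    C (2 * α) * f 3 - C 2 * X 0 * pderiv 0 (f 3) - C (2 * α) * X 1 * pderiv 1 (f 3)
      - C (2 * (1 + α)) * f 3 + pderiv 0 (pderiv 1 (f 0)),
    0,
    pderiv 0 (pderiv 1 (f 2))]

/-- `B(z₄) = (2α - 2z₁∂₁ - 2αz₂∂₂ - 2(1+α)z₄∂₄)∂₃ + z₄∂₁∂₂`. -/
noncomputable def B4 (α : ℂ) (f : SP) : SP :=
  ![C (2 * α) * f 1 - C 2 * X 0 * pderiv 0 (f 1) - C (2 * α) * X 1 * pderiv 1 (f 1),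
    0,
    C (2 * α) * f 3 - C 2 * X 0 * pderiv 0 (f 3) - C (2 * α) * X 1 * pderiv 1 (f 3)
      - C (2 * (1 + α)) * f 3 + pderiv 0 (pderiv 1 (f 0)),
    -pderiv 0 (pderiv 1 (f 1))]

/-- Evaluation at `z = 0` (keeps the purely even component and sets `z₁ = z₂ = 0`). -/
noncomputable def val0 (f : SP) : ℂ := MvPolynomial.eval (fun _ => (0 : ℂ)) (f 0)

lemma dpow (n : ℕ) :
    pderiv (0 : Fin 2) ((X 0 : MvPolynomial (Fin 2) ℂ) ^ (n+1)) = C ((n:ℂ)+1) * X 0 ^ n := by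
  induction n with
  | zero => simp
  | succ m ih => rw [pow_succ, pderiv_mul, ih]; simp; ring

lemma dpow1 (n : ℕ) : pderiv (1 : Fin 2) ((X 0 : MvPolynomial (Fin 2) ℂ) ^ n) = 0 := by
  induction n with
  | zero => simp
  | succ m ih => rw [pow_succ, pderiv_mul, ih]; simp

lemma step (α c : ℂ) (k : ℕ) :
    B1 α ![C c * X 0 ^ (k+1), 0, 0, 0]
      = ![C (c * (k+1) * ((k:ℂ) - α)) * X 0 ^ k, 0, 0, 0] := by
  funext i
  fin_cases i <;> simp [B1, pderiv_C_mul, dpow]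
  cases k with
  | zero => simp; ring
  | succ m => simp only [Nat.add_sub_cancel]; push_cast; ring

lemma key (α : ℂ) (k : ℕ) (c : ℂ) :
    val0 ((B1 α)^[k] ![C c * X 0 ^ k, 0, 0, 0])
      = c * (Nat.factorial k : ℂ) * poch (-α) k := by
  induction k generalizing c with
  | zero => simp [val0, poch, Nat.factorial]
  | succ m ih =>
      rw [Function.iterate_succ_apply, step, ih]
      rw [show poch (-α) (m+1) = poch (-α) m * (-α + m) from Finset.prod_range_succ _ _,
        Nat.factorial_succ]
      push_cast; ring

lemma b2eq (α : ℂ) (k : ℕ) :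
    B2 α ![X 0 ^ k * X 1, 0, 0, 0] = ![C (-1 : ℂ) * X 0 ^ k, 0, 0, 0] := by
  funext i
  fin_cases i <;> simp [B2, pderiv_mul, dpow1]

lemma b3eq (α : ℂ) (k : ℕ) :
    B3 α ![0, 0, X 0 ^ k, 0] = ![C (2 * (k:ℂ) - 2 * α) * X 0 ^ k, 0, 0, 0] := by
  funext i
  fin_cases i <;> simp [B3, dpow1]
  cases k with
  | zero => simp
  | succ m => simp only [Nat.add_sub_cancel]; push_cast; ring

lemma b4eq (α : ℂ) (k : ℕ) :
    B4 α ![0, X 0 ^ k, 0, 0] = ![C (2 * α - 2 * (k:ℂ)) * X 0 ^ k, 0, 0, 0] := by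
  funext i
  fin_cases i <;> simp [B4, dpow1]
  cases k with
  | zero => simp
  | succ m => simp only [Nat.add_sub_cancel]; push_cast; ring

/-- Bessel-Fischer pairings on the Fock space `F_α` (`λ = α ∉ ℕ`):
`⟨z₁^k, z₁^k⟩ = k!(-α)_k`, `⟨z₁^k z₂, z₁^k z₂⟩ = -k!(-α)_k`,
`⟨z₁^k z₃, z₁^k z₄⟩ = -⟨z₁^k z₄, z₁^k z₃⟩ = 2 k!(-α)_{k+1}`,
expressed via `⟨p,q⟩_B = p(B) q̄(z)|_{z=0}`. -/
theorem stmt17 (α : ℂ) (hα : ∀ n : ℕ, α ≠ n) (k : ℕ) :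
    val0 ((B1 α)^[k] ![X 0 ^ k, 0, 0, 0]) = (Nat.factorial k : ℂ) * poch (-α) k
    ∧ val0 ((B1 α)^[k] (B2 α ![X 0 ^ k * X 1, 0, 0, 0]))
        = -((Nat.factorial k : ℂ) * poch (-α) k)
    ∧ val0 ((B1 α)^[k] (B3 α ![0, 0, X 0 ^ k, 0]))
        = 2 * (Nat.factorial k : ℂ) * poch (-α) (k + 1)
    ∧ val0 ((B1 α)^[k] (B4 α ![0, X 0 ^ k, 0, 0]))
        = -(2 * (Nat.factorial k : ℂ) * poch (-α) (k + 1)) := by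
  have e1 : (![X 0 ^ k, 0, 0, 0] : SP) = ![C (1:ℂ) * X 0 ^ k, 0, 0, 0] := by
    funext i; fin_cases i <;> simp
  have hpoch : poch (-α) (k+1) = poch (-α) k * (-α + k) := Finset.prod_range_succ _ _
  refine ⟨?_, ?_, ?_, ?_⟩
  · rw [e1, key]; ring
  · rw [b2eq, key]; ring
  · rw [b3eq, key, hpoch]; ring
  · rw [b4eq, key, hpoch]; ring
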